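/- arXiv:2109.13684 — 4 statements merged into one kernel-verified Lean document; each statement's English description precedes it below -/
import Mathlib

section
/- Let γ(α) = (√(1-4α) - 1)/2. Then ∑_{n=1}^∞ C_{n-1} α^n / n = -2γ(α) + ln(1 + γ(α)) for |α| < 1/4, where C_n are the Catalan numbers. -/
open Finset

private lemma catalan_le_four_pow' (n : ℕ) : (catalan n : ℝ) ≤ 4 ^ n := by
  have h1 : catalan n ≤ 4 ^ n := by
    calc catalan n ≤ (n+1) * catalan n := Nat.le_mul_of_pos_left _ n.succ_pos
    _ = n.centralBinom := succ_mul_catalan_eq_centralBinom n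
    _ ≤ ∑ m ∈ range (2*n+1), (2*n).choose m :=
        Finset.single_le_sum (f := fun m => (2*n).choose m) (fun _ _ => Nat.zero_le _)
          (Finset.mem_range.2 (by omega))
    _ = 2 ^ (2*n) := Nat.sum_range_choose (2*n)
    _ = 4 ^ n := by rw [pow_mul]; norm_num
  exact_mod_cast h1

/-- With γ(α) = (√(1-4α)-1)/2, one has
∑_{n≥1} C_{n-1} α^n / n = -2γ(α) + ln(1+γ(α)) for |α| < 1/4. -/
theorem stmt_2 (α : ℝ) (hα : |α| < 1/4)
    (γ : ℝ → ℝ) (hγ : ∀ a, γ a = (Real.sqrt (1 - 4*a) - 1) / 2) :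
    ∑' n : ℕ, (catalan n : ℝ) * α ^ (n + 1) / (n + 1)
      = -2 * γ α + Real.log (1 + γ α) := by
  have hγ' : γ = fun a => (Real.sqrt (1 - 4*a) - 1) / 2 := funext hγ
  subst hγ'
  set r : ℝ := |α|/2 + 1/8 with hr
  have habs0 := abs_nonneg α
  have h0r : (0:ℝ) < r := by positivity
  have hr4 : 4*r < 1 := by rw [hr]; linarith
  have hαr : |α| < r := by rw [hr]; linarith
  set s : Set ℝ := Set.Ioo (-r) r with hsdef
  have hs_open : IsOpen s := isOpen_Ioo
  have hs_conn : IsPreconnected s := (convex_Ioo _ _).isPreconnected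
  have h0s : (0:ℝ) ∈ s := ⟨by linarith, h0r⟩
  have hαs : α ∈ s := by rcases abs_lt.1 hαr with ⟨h1, h2⟩; exact ⟨h1, h2⟩
  have habs : ∀ x ∈ s, |x| < r := fun x hx => abs_lt.2 ⟨hx.1, hx.2⟩
  have hgeo : Summable (fun n : ℕ => (4*r)^n) :=
    summable_geometric_of_lt_one (by positivity) hr4
  have hbound : ∀ (n : ℕ) (x : ℝ), |x| ≤ r → ‖(catalan n : ℝ) * x ^ n‖ ≤ (4*r)^n := by
    intro n x hx
    have hcn : ‖(catalan n:ℝ)‖ = (catalan n:ℝ) := Real.norm_of_nonneg (by positivity)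
    rw [norm_mul, norm_pow, hcn, mul_pow, Real.norm_eq_abs]
    exact mul_le_mul (catalan_le_four_pow' n) (pow_le_pow_left₀ (abs_nonneg x) hx n)
      (by positivity) (by positivity)
  have hS : ∀ x : ℝ, |x| ≤ r → Summable (fun n : ℕ => (catalan n : ℝ) * x ^ n) :=
    fun x hx => Summable.of_norm_bounded hgeo (fun n => hbound n x hx)
  set S : ℝ → ℝ := fun x => ∑' n : ℕ, (catalan n : ℝ) * x ^ n with hSdef
  -- derivative of F term by term
  have hterm : ∀ (n : ℕ) (y : ℝ),
      HasDerivAt (fun z : ℝ => (catalan n : ℝ) * z ^ (n+1) / ((n:ℝ)+1))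
        ((catalan n : ℝ) * y ^ n) y := by
    intro n y
    have hn : ((n:ℝ)+1) ≠ 0 := by positivity
    have h1 : HasDerivAt (fun z : ℝ => z ^ (n+1)) (((n:ℝ)+1) * y ^ n) y := by
      simpa using hasDerivAt_pow (n+1) y
    have h2 := h1.const_mul ((catalan n : ℝ) / ((n:ℝ)+1))
    have heq : (fun z : ℝ => (catalan n : ℝ) / ((n:ℝ)+1) * z ^ (n+1))
        = fun z : ℝ => (catalan n:ℝ) * z^(n+1) / ((n:ℝ)+1) := by
      funext z; ring
    rw [heq] at h2
    refine h2.congr_deriv ?_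
    rw [← mul_assoc, div_mul_cancel₀ _ hn]
  have hF : ∀ x ∈ s, HasDerivAt (fun y : ℝ => ∑' n : ℕ, (catalan n : ℝ) * y ^ (n+1) / ((n:ℝ)+1)) (S x) x := by
    intro x hx
    have h0sum : Summable (fun n : ℕ => (catalan n : ℝ) * (0:ℝ) ^ (n+1) / ((n:ℝ)+1)) := by
      have : (fun n : ℕ => (catalan n : ℝ) * (0:ℝ) ^ (n+1) / ((n:ℝ)+1)) = fun _ => 0 := by
        funext n; simp
      rw [this]; exact summable_zero
    exact hasDerivAt_tsum_of_isPreconnected hgeo hs_open hs_conn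
      (fun n y _ => hterm n y) (fun n y hy => hbound n y (habs y hy).le) h0s h0sum hx
  -- continuity of S on s
  have hScont : ContinuousOn S s := by
    refine (tendstoUniformlyOn_tsum hgeo (fun n x hx => hbound n x (habs x hx).le)).continuousOn ?_
    refine Filter.Eventually.frequently (Filter.Eventually.of_forall fun t => ?_)
    exact (continuousOn_finset_sum t (fun n _ => by fun_prop))
  -- quadratic identity
  have hquad : ∀ x ∈ s, x * (S x * S x) = S x - 1 := by
    intro x hx
    have hxr := (habs x hx).le
    have hnorm : Summable (fun n : ℕ => ‖(catalan n:ℝ) * x^n‖) :=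
      hgeo.of_nonneg_of_le (fun n => norm_nonneg _) (fun n => hbound n x hxr)
    have hcp := tsum_mul_tsum_eq_tsum_sum_antidiagonal_of_summable_norm hnorm hnorm
    have hinner : ∀ n : ℕ, (∑ kl ∈ Finset.HasAntidiagonal.antidiagonal n,
        ((catalan kl.1:ℝ) * x^kl.1) * ((catalan kl.2:ℝ) * x^kl.2)) = (catalan (n+1) : ℝ) * x ^ n := by
      intro n
      rw [catalan_succ']
      push_cast
      rw [Finset.sum_mul]
      refine Finset.sum_congr rfl (fun kl hkl => ?_)
      have hmem := Finset.HasAntidiagonal.mem_antidiagonal.1 hkl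
      rw [← hmem, pow_add]; ring
    have hSS : S x * S x = ∑' n : ℕ, (catalan (n+1) : ℝ) * x ^ n := by
      rw [hSdef]
      rw [hcp]
      exact tsum_congr hinner
    have hshift : S x = 1 + ∑' n : ℕ, (catalan (n+1) : ℝ) * x ^ (n+1) := by
      rw [show S x = ∑' n : ℕ, (catalan n : ℝ) * x ^ n from rfl,
        Summable.tsum_eq_zero_add (hS x hxr)]
      simp
    have hmul : x * (S x * S x) = ∑' n : ℕ, (catalan (n+1) : ℝ) * x ^ (n+1) := by
      rw [hSS, ← tsum_mul_left]
      exact tsum_congr (fun n => by ring)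
    rw [hmul, hshift]; ring
  have hsqpos : ∀ x ∈ s, (0:ℝ) < 1 - 4*x := by
    intro x hx
    have := hx.2
    simp only [hsdef, Set.mem_Ioo] at hx
    linarith [hx.2]
  have hsqeq : ∀ x ∈ s, (2*x*S x - 1)^2 = 1 - 4*x := by
    intro x hx
    linear_combination 4*x*(hquad x hx)
  have hne : ∀ x ∈ s, 2*x*S x - 1 ≠ 0 := by
    intro x hx h0
    have := hsqeq x hx
    rw [h0] at this
    have := hsqpos x hx
    nlinarith
  have hneg : ∀ x ∈ s, 2*x*S x - 1 < 0 := by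
    intro x hx
    by_contra hpos
    push_neg at hpos
    have hcont : ContinuousOn (fun y => 2*y*S y - 1) s := by
      exact ((continuousOn_const.mul continuousOn_id).mul hScont).sub continuousOn_const
    have h00 : (fun y => 2*y*S y - 1) 0 = -1 := by norm_num
    have hiv := IsPreconnected.intermediate_value hs_conn h0s hx hcont
    have h0mem : (0:ℝ) ∈ Set.Icc ((fun y => 2*y*S y - 1) 0) ((fun y => 2*y*S y - 1) x) := by
      rw [h00]; constructor <;> [norm_num; exact hpos]
    obtain ⟨y, hy, hy0⟩ := hiv h0mem
    exact hne y hy hy0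
  have hsqrt : ∀ x ∈ s, Real.sqrt (1-4*x) = 1 - 2*x*S x := by
    intro x hx
    rw [← hsqeq x hx, Real.sqrt_sq_eq_abs, abs_of_neg (hneg x hx)]
    ring
  have hS2 : ∀ x ∈ s, S x * (1 + Real.sqrt (1-4*x)) = 2 := by
    intro x hx
    rw [hsqrt x hx]
    linear_combination (-2)*(hquad x hx)
  -- derivative of G
  have hG : ∀ x ∈ s, HasDerivAt
      (fun y : ℝ => -2 * ((Real.sqrt (1 - 4*y) - 1)/2) + Real.log (1 + (Real.sqrt (1 - 4*y) - 1)/2))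
      (S x) x := by
    intro x hx
    have hpos := hsqpos x hx
    set t := Real.sqrt (1-4*x) with ht
    have ht0 : 0 < t := Real.sqrt_pos.2 hpos
    have hinner : HasDerivAt (fun y : ℝ => 1 - 4*y) (-4) x := by
      simpa using ((hasDerivAt_id x).const_mul (4:ℝ)).const_sub 1
    have hsqrtD : HasDerivAt (fun y : ℝ => Real.sqrt (1-4*y)) (1/(2*t) * (-4)) x := by
      have := (Real.hasDerivAt_sqrt (ne_of_gt hpos)).comp x hinner
      simpa [Function.comp_def, ht] using this
    have hγD : HasDerivAt (fun y : ℝ => (Real.sqrt (1-4*y) - 1)/2) ((1/(2*t) * (-4))/2) x :=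
      (hsqrtD.sub_const 1).div_const 2
    have h1γ : (0:ℝ) < 1 + (t-1)/2 := by linarith
    have hlogD : HasDerivAt (fun y : ℝ => Real.log (1 + (Real.sqrt (1-4*y) - 1)/2))
        ((1 + (t-1)/2)⁻¹ * ((1/(2*t) * (-4))/2)) x := by
      have hcomp := (Real.hasDerivAt_log (ne_of_gt h1γ)).comp x (hγD.const_add 1)
      simpa [Function.comp_def, ht] using hcomp
    have htot := (hγD.const_mul (-2:ℝ)).add hlogD
    have hSx : S x = 2 / (1+t) := by
      have h1t : (0:ℝ) < 1 + t := by linarith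
      field_simp
      linarith [hS2 x hx]
    refine htot.congr_deriv (Eq.symm ?_)
    rw [hSx]
    have h1t : (1:ℝ) + t ≠ 0 := by positivity
    have h2t : (2:ℝ) + (t - 1) ≠ 0 := by intro h; apply h1t; linarith
    field_simp
    ring
  -- combine: H := F - G has zero derivative on s
  set F : ℝ → ℝ := fun y => ∑' n : ℕ, (catalan n : ℝ) * y ^ (n+1) / ((n:ℝ)+1) with hFdef
  set G : ℝ → ℝ := fun y => -2 * ((Real.sqrt (1 - 4*y) - 1)/2) + Real.log (1 + (Real.sqrt (1 - 4*y) - 1)/2) with hGdef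
  have hH : ∀ x ∈ s, HasDerivAt (fun y => F y - G y) 0 x := by
    intro x hx
    have h := ((hF x hx).sub (hG x hx) : HasDerivAt (fun y => F y - G y) (S x - S x) x)
    rw [sub_self] at h
    exact h
  have hF0 : F 0 = 0 := by
    rw [hFdef]
    simp
  have hG0 : G 0 = 0 := by
    rw [hGdef]
    norm_num
  have hgoal : F α = G α := by
    rcases le_or_gt 0 α with h0α | hα0
    · have hsub : Set.Icc (0:ℝ) α ⊆ s := by
        intro x hx
        exact ⟨by linarith [hx.1], lt_of_le_of_lt hx.2 (lt_of_abs_lt hαr)⟩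
      have hc := constant_of_has_deriv_right_zero
        (f := fun y => F y - G y) (a := 0) (b := α)
        (fun x hx => ((hH x (hsub hx)).differentiableAt.continuousAt).continuousWithinAt)
        (fun x hx => ((hH x (hsub (Set.Ico_subset_Icc_self hx))).hasDerivWithinAt))
      have h2 : F α - G α = F 0 - G 0 := hc α (Set.right_mem_Icc.2 h0α)
      rw [hF0, hG0] at h2
      linarith
    · have hsub : Set.Icc α (0:ℝ) ⊆ s := by
        intro x hx
        refine ⟨lt_of_lt_of_le ?_ hx.1, by linarith [hx.2, h0r]⟩
        have := neg_abs_le α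
        have : -r < α := by linarith [abs_lt.1 hαr]
        exact this
      have hc := constant_of_has_deriv_right_zero
        (f := fun y => F y - G y) (a := α) (b := 0)
        (fun x hx => ((hH x (hsub hx)).differentiableAt.continuousAt).continuousWithinAt)
        (fun x hx => ((hH x (hsub (Set.Ico_subset_Icc_self hx))).hasDerivWithinAt))
      have h2 : F 0 - G 0 = F α - G α := hc 0 (Set.right_mem_Icc.2 hα0.le)
      rw [hF0, hG0] at h2
      linarith
  exact hgoal
end

section
/- Let s be a real parameter and suppose γ(α) = ∑_{n≥1} c_n α^n is a formal power series solving the ODE -(γ + γ·(s α γ' + γ)) = α, i.e. -γ(α) - γ(α)·(s α γ'(α) + γ(α)) = α as formal power series. Then c₁ = -1, c₂ = -(s+1), c₃ = -(s+1)(2+3s), and c₄ = -(s+1)(2s+1)(7s+5). -/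
open PowerSeries in
/-- If γ(α) = ∑_{n≥1} c_n α^n solves the RG equation
-γ - γ·(sαγ' + γ) = α of the nonlinear D=4 Dyson-Schwinger equation, then
c₁ = -1, c₂ = -(s+1), c₃ = -(s+1)(2+3s), c₄ = -(s+1)(2s+1)(7s+5). -/
theorem stmt_11 (s : ℝ) (γ : PowerSeries ℝ)
    (hγ0 : PowerSeries.constantCoeff γ = 0)
    (hode : -γ - γ * (s • (PowerSeries.X * PowerSeries.derivative ℝ γ) + γ)
      = PowerSeries.X) :
    PowerSeries.coeff 1 γ = -1 ∧
    PowerSeries.coeff 2 γ = -(s + 1) ∧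
    PowerSeries.coeff 3 γ = -(s + 1) * (2 + 3*s) ∧
    PowerSeries.coeff 4 γ = -(s + 1) * (2*s + 1) * (7*s + 5) := by
  have h1 := congrArg (PowerSeries.coeff 1) hode
  have h2 := congrArg (PowerSeries.coeff 2) hode
  have h3 := congrArg (PowerSeries.coeff 3) hode
  have h4 := congrArg (PowerSeries.coeff 4) hode
  simp [PowerSeries.coeff_mul, Finset.Nat.sum_antidiagonal_eq_sum_range_succ_mk,
    PowerSeries.coeff_derivative, Finset.sum_range_succ, PowerSeries.coeff_X,
    PowerSeries.coeff_zero_eq_constantCoeff, hγ0] at h1 h2 h3 h4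
  have hc1 : PowerSeries.coeff 1 γ = -1 := by linarith
  rw [hc1] at h2 h3 h4
  have hc2 : PowerSeries.coeff 2 γ = -(s + 1) := by linear_combination -h2
  rw [hc2] at h3 h4
  have hc3 : PowerSeries.coeff 3 γ = -(s + 1) * (2 + 3*s) := by linear_combination -h3
  rw [hc3] at h4
  have hc4 : PowerSeries.coeff 4 γ = -(s + 1) * (2*s + 1) * (7*s + 5) := by
    linear_combination -h4
  exact ⟨hc1, hc2, hc3, hc4⟩
end

section
/- Let F : ℝ → ℝ be differentiable. Then G(α, x) := α · F(ln x - 1/α) satisfies the partial differential equation ∂_{ln x} G = -α G + α² ∂_α G for all α ≠ 0, x > 0. -/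
/-- For any differentiable F, G(α,x) = α·F(ln x - 1/α) solves the
Callan-Symanzik equation ∂_{ln x} G = -α G + α² ∂_α G (case γ(α) = -α,
β(α) = α of Kreimer's toy model). -/
theorem stmt_13 (F : ℝ → ℝ) (hF : Differentiable ℝ F)
    (G : ℝ → ℝ → ℝ) (hG : ∀ a x, G a x = a * F (Real.log x - 1/a)) :
    ∀ (α : ℝ), α ≠ 0 → ∀ (x : ℝ), 0 < x →
      x * deriv (fun y => G α y) x = -α * G α x + α^2 * deriv (fun a => G a x) α := by
  intro α hα x hx
  set u : ℝ := Real.log x - 1/α with hu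
  have hF' := (hF u).hasDerivAt
  -- derivative in x
  have h1 : HasDerivAt (fun y => G α y) (α * (deriv F u * (1/x))) x := by
    have hlog : HasDerivAt (fun y : ℝ => Real.log y - 1/α) (1/x) x := by
      simpa using (Real.hasDerivAt_log hx.ne').sub_const (1/α)
    have := (hF'.comp x hlog).const_mul α
    simpa [hG, hu, Function.comp] using this
  -- derivative in α
  have h2 : HasDerivAt (fun a => G a x) (F u + α * (deriv F u * (1/α^2))) α := by
    have hinner : HasDerivAt (fun a : ℝ => Real.log x - 1/a) (1/α^2) α := by
      have : HasDerivAt (fun a : ℝ => a⁻¹) (-(α^2)⁻¹) α := hasDerivAt_inv hα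
      have := (hasDerivAt_const α (Real.log x)).sub this
      simpa [one_div, sq, Pi.sub_def] using this
    have hcomp := hF'.comp α hinner
    have := (hasDerivAt_id α).mul hcomp
    simpa [hG, hu, Function.comp, mul_comm, Pi.mul_def, id] using this
  rw [h1.deriv, h2.deriv, hG, ← hu]
  field_simp
  ring
end

section
/- Let γ(α) be a formal power series with γ(0) = 0, s a real number, and L(α) a formal power series (denoting ln δ(α)). Suppose the family γ_k(α) (k ≥ 0) satisfies γ₀ = 1, and the Callan-Symanzik recursion k γ_k = γ·(1 + s α ∂_α) γ_{k-1} for all k ≥ 1. Define γ'_k(α) := ∑_{j=k}^∞ (j choose k) γ_j(α) L(α)^{j-k} (well-defined as formal power series since γ_j ∈ O(α^j)). Then the γ'_k satisfy the recursion (k+1) γ'_{k+1} = γ' · (1 + s α ∂_α) γ'_k, where γ'(α) := γ(α) / (1 + s γ(α) · α ∂_α L(α)). -/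
open PowerSeries Finset

private lemma auxXdMul (f g : PowerSeries ℝ) :
    PowerSeries.X * PowerSeries.derivative ℝ (f * g) =
      (PowerSeries.X * PowerSeries.derivative ℝ f) * g +
        f * (PowerSeries.X * PowerSeries.derivative ℝ g) := by
  rw [Derivation.leibniz]
  simp only [smul_eq_mul]
  ring

private lemma auxXdPow (L : PowerSeries ℝ) (m : ℕ) :
    PowerSeries.X * PowerSeries.derivative ℝ (L ^ (m+1)) =
      PowerSeries.C ((m : ℝ) + 1) *
        (L ^ m * (PowerSeries.X * PowerSeries.derivative ℝ L)) := by
  induction m with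
  | zero => simp
  | succ m ih =>
      rw [pow_succ, auxXdMul, ih]
      have h : PowerSeries.C (((m+1 : ℕ) : ℝ) + 1) = PowerSeries.C ((m:ℝ)+1) + 1 := by
        push_cast
        rw [map_add, map_one]
      rw [h]
      ring

private lemma auxCoeffXd (f : PowerSeries ℝ) (m : ℕ) :
    PowerSeries.coeff m (PowerSeries.X * PowerSeries.derivative ℝ f) =
      (m : ℝ) * PowerSeries.coeff m f := by
  cases m with
  | zero => simp
  | succ m =>
      rw [PowerSeries.coeff_succ_X_mul, PowerSeries.coeff_derivative]
      push_cast
      ring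
open PowerSeries in
/-- Shifting the kinematic renormalization point by δ(α) = e^{L(α)} transforms
log-expansion coefficients γ_k satisfying the Callan-Symanzik recursion
k γ_k = γ(1+sα∂_α)γ_{k-1} into γ'_k = ∑_{j≥k} (j choose k) γ_j L^{j-k}, which
satisfy the same recursion with anomalous dimension
γ' = γ/(1 + sγ·α∂_α L). -/
theorem stmt_16 (s : ℝ) (γ L : PowerSeries ℝ)
    (hγ0 : PowerSeries.constantCoeff γ = 0)
    (γk : ℕ → PowerSeries ℝ)
    (h0 : γk 0 = 1)
    (hord : ∀ j n : ℕ, n < j → PowerSeries.coeff n (γk j) = 0)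
    (hrec : ∀ k : ℕ, 1 ≤ k →
      (k : ℝ) • γk k =
        γ * (γk (k-1) + s • (PowerSeries.X * PowerSeries.derivative ℝ (γk (k-1)))))
    (γk' : ℕ → PowerSeries ℝ)
    (hdef : ∀ k n : ℕ, PowerSeries.coeff n (γk' k) =
      ∑ j ∈ Finset.Icc k n,
        (Nat.choose j k : ℝ) * PowerSeries.coeff n (γk j * L ^ (j - k)))
    (γ' : PowerSeries ℝ)
    (hγ' : γ' = γ *
      (1 + s • (γ * (PowerSeries.X * PowerSeries.derivative ℝ L)))⁻¹) :
    ∀ k : ℕ, ((k : ℝ) + 1) • γk' (k+1) =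
      γ' * (γk' k + s • (PowerSeries.X * PowerSeries.derivative ℝ (γk' k))) := by
  classical
  intro k
  set DL : PowerSeries ℝ := PowerSeries.X * PowerSeries.derivative ℝ L with hDL
  set u : PowerSeries ℝ := 1 + s • (γ * DL) with hudef
  have hu0 : PowerSeries.constantCoeff u ≠ 0 := by
    have h1 : PowerSeries.constantCoeff u = 1 := by
      simp [hudef, hDL, hγ0]
    rw [h1]; exact one_ne_zero
  have key : u * (PowerSeries.C ((k:ℝ)+1) * γk' (k+1)) =
      γ * (γk' k + s • (PowerSeries.X * PowerSeries.derivative ℝ (γk' k))) := by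
    ext n
    have hvan : ∀ (j m : ℕ) (f : PowerSeries ℝ), m < j →
        PowerSeries.coeff m (γk j * f) = 0 := by
      intro j m f hm
      rw [PowerSeries.coeff_mul]
      refine Finset.sum_eq_zero ?_
      rintro ⟨p, q⟩ hpq
      simp only [Finset.HasAntidiagonal.mem_antidiagonal] at hpq
      have hp : p < j := by omega
      rw [hord j p hp, zero_mul]
    set G : ℕ → PowerSeries ℝ := fun l => ∑ j ∈ Finset.Icc l n,
      PowerSeries.C ((j.choose l : ℕ) : ℝ) * (γk j * L ^ (j - l)) with hGdef
    have hGcoeff : ∀ (l m : ℕ), m ≤ n →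
        PowerSeries.coeff m (γk' l) = PowerSeries.coeff m (G l) := by
      intro l m hm
      rw [hdef l m]
      simp only [hGdef, map_sum, ← PowerSeries.smul_eq_C_mul, map_smul, smul_eq_mul]
      refine Finset.sum_subset (Finset.Icc_subset_Icc_right hm) ?_
      intro j hj hj2
      have hmj : m < j := by
        simp only [Finset.mem_Icc] at hj hj2
        omega
      rw [hvan j m _ hmj, mul_zero]
    have htrans : ∀ (c a b : PowerSeries ℝ),
        (∀ m, m ≤ n → PowerSeries.coeff m a = PowerSeries.coeff m b) →
        PowerSeries.coeff n (c * a) = PowerSeries.coeff n (c * b) := by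
      intro c a b h
      rw [PowerSeries.coeff_mul, PowerSeries.coeff_mul]
      refine Finset.sum_congr rfl ?_
      rintro ⟨p, q⟩ hpq
      simp only [Finset.HasAntidiagonal.mem_antidiagonal] at hpq
      rw [h q (by omega)]
    have main : u * (PowerSeries.C ((k:ℝ)+1) * G (k+1)) +
        PowerSeries.C ((((n+1) * n.choose k : ℕ)) : ℝ) * (γk (n+1) * L ^ (n - k)) =
        γ * (G k + PowerSeries.C s *
          (PowerSeries.X * PowerSeries.derivative ℝ (G k))) := by
      by_cases hkn : k ≤ n
      · -- term identity
        have hterm : ∀ (j i : ℕ),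
            γ * ((γk j * L ^ i) + PowerSeries.C s *
              (PowerSeries.X * PowerSeries.derivative ℝ (γk j * L ^ i))) =
            PowerSeries.C ((j:ℝ)+1) * (γk (j+1) * L ^ i) +
              PowerSeries.C (s * (i:ℝ)) * (γ * DL * (γk j * L ^ (i-1))) := by
          intro j i
          have h2 : PowerSeries.X * PowerSeries.derivative ℝ (L ^ i) =
              PowerSeries.C (i:ℝ) * (L ^ (i-1) * DL) := by
            cases i with
            | zero => simp
            | succ i =>
                rw [hDL, auxXdPow]
                push_cast
                ring
          have h3 : γ * (γk j + PowerSeries.C s *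
                (PowerSeries.X * PowerSeries.derivative ℝ (γk j))) =
              PowerSeries.C ((j:ℝ)+1) * γk (j+1) := by
            have h4 := hrec (j+1) (by omega)
            simp only [Nat.add_sub_cancel, PowerSeries.smul_eq_C_mul] at h4
            push_cast at h4
            exact h4.symm
          rw [auxXdMul, h2]
          calc γ * (γk j * L ^ i + PowerSeries.C s *
                ((PowerSeries.X * PowerSeries.derivative ℝ (γk j)) * L ^ i +
                  γk j * (PowerSeries.C (i:ℝ) * (L ^ (i-1) * DL))))
              = (γ * (γk j + PowerSeries.C s *
                  (PowerSeries.X * PowerSeries.derivative ℝ (γk j)))) * L ^ i +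
                (PowerSeries.C s * PowerSeries.C (i:ℝ)) *
                  (γ * DL * (γk j * L ^ (i-1))) := by ring
            _ = _ := by rw [h3, ← map_mul]; ring
        -- derivative of G k
        have hdG : PowerSeries.X * PowerSeries.derivative ℝ (G k) =
            ∑ j ∈ Finset.Icc k n, PowerSeries.C ((j.choose k : ℕ) : ℝ) *
              (PowerSeries.X * PowerSeries.derivative ℝ (γk j * L ^ (j - k))) := by
          simp only [hGdef]
          rw [map_sum, Finset.mul_sum]
          refine Finset.sum_congr rfl ?_
          intro j hj
          rw [Derivation.leibniz, PowerSeries.derivative_C, smul_zero, add_zero, smul_eq_mul]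
          ring
        -- RHS as a single sum
        have hR : γ * (G k + PowerSeries.C s *
              (PowerSeries.X * PowerSeries.derivative ℝ (G k))) =
            ∑ j ∈ Finset.Icc k n,
              (PowerSeries.C ((j.choose k : ℕ) : ℝ) *
                (PowerSeries.C ((j:ℝ)+1) * (γk (j+1) * L ^ (j-k))) +
               PowerSeries.C ((j.choose k : ℕ) : ℝ) *
                (PowerSeries.C (s * ((j-k : ℕ):ℝ)) * (γ * DL * (γk j * L ^ (j-k-1))))) := by
          have hc : G k + PowerSeries.C s *
                (PowerSeries.X * PowerSeries.derivative ℝ (G k)) =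
              ∑ j ∈ Finset.Icc k n, PowerSeries.C ((j.choose k : ℕ) : ℝ) *
                ((γk j * L ^ (j-k)) + PowerSeries.C s *
                  (PowerSeries.X * PowerSeries.derivative ℝ (γk j * L ^ (j-k)))) := by
            rw [hdG]
            simp only [hGdef]
            rw [Finset.mul_sum, ← Finset.sum_add_distrib]
            refine Finset.sum_congr rfl fun j hj => by ring
          rw [hc, Finset.mul_sum]
          refine Finset.sum_congr rfl fun j hj => ?_
          rw [show γ * (PowerSeries.C ((j.choose k : ℕ) : ℝ) *
                ((γk j * L ^ (j-k)) + PowerSeries.C s *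
                  (PowerSeries.X * PowerSeries.derivative ℝ (γk j * L ^ (j-k))))) =
              PowerSeries.C ((j.choose k : ℕ) : ℝ) *
                (γ * ((γk j * L ^ (j-k)) + PowerSeries.C s *
                  (PowerSeries.X * PowerSeries.derivative ℝ (γk j * L ^ (j-k)))))
            from by ring, hterm j (j-k), mul_add]
        -- LHS as two sums
        have hL : u * (PowerSeries.C ((k:ℝ)+1) * G (k+1)) =
            (∑ j ∈ Finset.Icc (k+1) n,
              PowerSeries.C ((((k+1) * j.choose (k+1) : ℕ)) : ℝ) * (γk j * L ^ (j-k-1))) +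
            ∑ j ∈ Finset.Icc (k+1) n,
              PowerSeries.C (s * ((((k+1) * j.choose (k+1) : ℕ)) : ℝ)) *
                (γ * DL * (γk j * L ^ (j-k-1))) := by
          rw [hudef, PowerSeries.smul_eq_C_mul]
          simp only [hGdef]
          rw [add_mul, one_mul, Finset.mul_sum]
          congr 1
          · refine Finset.sum_congr rfl fun j hj => ?_
            have he : j - (k+1) = j - k - 1 := by omega
            rw [he, ← mul_assoc, ← map_mul]
            congr 2
            push_cast
            ring
          · rw [Finset.mul_sum]
            refine Finset.sum_congr rfl ?_
            intro j hj
            have he : j - (k+1) = j - k - 1 := by omega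
            rw [he]
            push_cast
            simp only [map_mul, map_add, map_one]
            ring
        -- reindex first RHS sum
        set g : ℕ → PowerSeries ℝ := fun i =>
          PowerSeries.C ((((k+1) * i.choose (k+1) : ℕ)) : ℝ) * (γk i * L ^ (i-k-1))
          with hgdef
        have hA : (∑ j ∈ Finset.Icc k n, PowerSeries.C ((j.choose k : ℕ) : ℝ) *
              (PowerSeries.C ((j:ℝ)+1) * (γk (j+1) * L ^ (j-k)))) =
            (∑ j ∈ Finset.Icc (k+1) n, g j) + g (n+1) := by
          have hstep : ∀ j : ℕ, PowerSeries.C ((j.choose k : ℕ) : ℝ) *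
              (PowerSeries.C ((j:ℝ)+1) * (γk (j+1) * L ^ (j-k))) = g (j+1) := by
            intro j
            have hnat : (j+1) * j.choose k = (k+1) * (j+1).choose (k+1) := by
              rw [Nat.add_one_mul_choose_eq]
              ring
            have he : j + 1 - k - 1 = j - k := by omega
            simp only [hgdef, he]
            rw [← mul_assoc, ← map_mul, ← hnat]
            congr 2
            push_cast
            ring
          calc (∑ j ∈ Finset.Icc k n, PowerSeries.C ((j.choose k : ℕ) : ℝ) *
              (PowerSeries.C ((j:ℝ)+1) * (γk (j+1) * L ^ (j-k))))
              = ∑ j ∈ Finset.Icc k n, g (j+1) :=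
                Finset.sum_congr rfl fun j _ => hstep j
            _ = ∑ j ∈ Finset.Icc (k+1) (n+1), g j := by
                rw [← Finset.map_add_right_Icc k n 1, Finset.sum_map]
                rfl
            _ = (∑ j ∈ Finset.Icc (k+1) n, g j) + g (n+1) :=
                Finset.sum_Icc_succ_top (by omega) g
        have hg : g (n+1) =
            PowerSeries.C ((((n+1) * n.choose k : ℕ)) : ℝ) * (γk (n+1) * L ^ (n - k)) := by
          have hnat : (k+1) * (n+1).choose (k+1) = (n+1) * n.choose k := by
            rw [Nat.add_one_mul_choose_eq]
            ring
          have he : n + 1 - k - 1 = n - k := by omega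
          simp only [hgdef, hnat, he]
        -- second sums match
        have hB : (∑ j ∈ Finset.Icc k n, PowerSeries.C ((j.choose k : ℕ) : ℝ) *
              (PowerSeries.C (s * ((j-k : ℕ):ℝ)) * (γ * DL * (γk j * L ^ (j-k-1))))) =
            ∑ j ∈ Finset.Icc (k+1) n,
              PowerSeries.C (s * ((((k+1) * j.choose (k+1) : ℕ)) : ℝ)) *
                (γ * DL * (γk j * L ^ (j-k-1))) := by
          rw [← Finset.Ioc_insert_left hkn, Finset.sum_insert (by simp)]
          rw [show (k - k : ℕ) = 0 from Nat.sub_self k]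
          simp only [Nat.cast_zero, mul_zero, map_zero, zero_mul, zero_add]
          rw [← Finset.Icc_add_one_left_eq_Ioc]
          refine Finset.sum_congr rfl fun j hj => ?_
          rw [← mul_assoc, ← map_mul]
          congr 2
          have hnat : j.choose k * (j-k) = (k+1) * j.choose (k+1) := by
            rw [← Nat.choose_succ_right_eq]
            ring
          calc ((j.choose k : ℕ) : ℝ) * (s * ((j-k : ℕ):ℝ))
              = s * (((j.choose k * (j-k) : ℕ)) : ℝ) := by push_cast; ring
            _ = s * ((((k+1) * j.choose (k+1) : ℕ)) : ℝ) := by rw [hnat]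
        rw [hL, hR, Finset.sum_add_distrib, hA, hB, ← hg]
        ring
      · -- degenerate case n < k
        have h1 : G k = 0 := by
          simp only [hGdef]
          rw [Finset.Icc_eq_empty (by omega), Finset.sum_empty]
        have h2 : G (k+1) = 0 := by
          simp only [hGdef]
          rw [Finset.Icc_eq_empty (by omega), Finset.sum_empty]
        have h3 : n.choose k = 0 := Nat.choose_eq_zero_of_lt (by omega)
        simp [h1, h2, h3]

    have e1 : PowerSeries.coeff n (u * (PowerSeries.C ((k:ℝ)+1) * γk' (k+1))) =
        PowerSeries.coeff n (u * (PowerSeries.C ((k:ℝ)+1) * G (k+1))) := by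
      refine htrans u _ _ ?_
      intro m hm
      simp only [← PowerSeries.smul_eq_C_mul, map_smul, smul_eq_mul]
      rw [hGcoeff (k+1) m hm]
    have e2 : PowerSeries.coeff n
          (γ * (γk' k + s • (PowerSeries.X * PowerSeries.derivative ℝ (γk' k)))) =
        PowerSeries.coeff n (γ * (G k + PowerSeries.C s *
          (PowerSeries.X * PowerSeries.derivative ℝ (G k)))) := by
      refine htrans γ _ _ ?_
      intro m hm
      simp only [map_add, ← PowerSeries.smul_eq_C_mul, map_smul, smul_eq_mul, auxCoeffXd]
      rw [hGcoeff k m hm]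
    have e3 : PowerSeries.coeff n
        (PowerSeries.C ((((n+1) * n.choose k : ℕ)) : ℝ) * (γk (n+1) * L ^ (n - k))) = 0 := by
      rw [← PowerSeries.smul_eq_C_mul, map_smul, smul_eq_mul,
        hvan (n+1) n _ (Nat.lt_succ_self n), mul_zero]
    rw [e1, e2, ← main, map_add (PowerSeries.coeff n), e3, add_zero]

  have huu : u⁻¹ * u = 1 := PowerSeries.inv_mul_cancel u hu0
  rw [hγ', PowerSeries.smul_eq_C_mul]
  calc PowerSeries.C ((k:ℝ)+1) * γk' (k+1)
      = (u⁻¹ * u) * (PowerSeries.C ((k:ℝ)+1) * γk' (k+1)) := by rw [huu, one_mul]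
    _ = u⁻¹ * (u * (PowerSeries.C ((k:ℝ)+1) * γk' (k+1))) := by ring
    _ = u⁻¹ * (γ * (γk' k + s • (PowerSeries.X * PowerSeries.derivative ℝ (γk' k)))) := by
        rw [key]
    _ = γ * u⁻¹ * (γk' k + s • (PowerSeries.X * PowerSeries.derivative ℝ (γk' k))) := by
        ring
end
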